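/- Every Mayet–Godowski equation holds in any ortholattice L admitting a strong set of states: let n ≥ 2 and let T₁, …, Tₙ and U₁, …, Uₙ be finite lists of elements of L such that the entries within each list Tᵢ are pairwise orthogonal, the entries within each list Uᵢ are pairwise orthogonal, and the multiset of all entries of T₁, …, Tₙ combined equals the multiset of all entries of U₁, …, Uₙ combined. Let tᵢ be the join of the entries of Tᵢ and uᵢ the join of the entries of Uᵢ. Then t₁ ⊓ ⋯ ⊓ tₙ = u₁ ⊓ ⋯ ⊓ uₙ. -/

import Mathlib

/-- An ortholattice: a bounded lattice with an orthocomplementation. -/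
class Ortholattice (α : Type*) extends Lattice α, BoundedOrder α, Compl α where
  compl_compl : ∀ a : α, aᶜᶜ = a
  compl_le_compl : ∀ a b : α, a ≤ b → bᶜ ≤ aᶜ
  inf_compl_self : ∀ a : α, a ⊓ aᶜ = ⊥
  sup_compl_self : ∀ a : α, a ⊔ aᶜ = ⊤

/-- A state (probability measure) on an ortholattice. -/
def IsState {α : Type*} [Ortholattice α] (m : α → ℝ) : Prop :=
  (∀ a : α, 0 ≤ m a ∧ m a ≤ 1) ∧ m ⊤ = 1 ∧
    ∀ a b : α, a ≤ bᶜ → m (a ⊔ b) = m a + m b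

section aux
variable {α : Type*} [Ortholattice α] {m : α → ℝ}

lemma aux_state_compl (hm : IsState m) (a : α) : m aᶜ = 1 - m a := by
  obtain ⟨hb, ht, hadd⟩ := hm
  have h1 : a ≤ aᶜᶜ := le_of_eq (Ortholattice.compl_compl a).symm
  have h2 := hadd a aᶜ h1
  rw [Ortholattice.sup_compl_self, ht] at h2
  linarith

lemma aux_state_mono (hm : IsState m) {a b : α} (h : a ≤ b) : m a ≤ m b := by
  obtain ⟨hb, ht, hadd⟩ := hm
  have h1 : a ≤ bᶜᶜ := le_trans h (le_of_eq (Ortholattice.compl_compl b).symm)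
  have h2 := hadd a bᶜ h1
  have h3 := (hb (a ⊔ bᶜ)).2
  have h4 := aux_state_compl ⟨hb, ht, hadd⟩ b
  linarith

lemma aux_foldr_le {c : α} {l : List α} (h : ∀ x ∈ l, x ≤ c) :
    l.foldr (· ⊔ ·) ⊥ ≤ c := by
  induction l with
  | nil => exact bot_le
  | cons a l ih =>
    exact sup_le (h a List.mem_cons_self) (ih fun x hx => h x (List.mem_cons_of_mem a hx))

lemma aux_state_foldr (hm : IsState m) {l : List α}
    (hl : l.Pairwise fun x y => x ≤ yᶜ) :
    m (l.foldr (· ⊔ ·) ⊥) = (l.map m).sum := by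
  induction l with
  | nil =>
    obtain ⟨hb, ht, hadd⟩ := hm
    have h := hadd ⊥ ⊥ (bot_le)
    simp only [List.foldr_nil, List.map_nil, List.sum_nil]
    simpa using h.symm
  | cons a l ih =>
    obtain ⟨ha, hl'⟩ := List.pairwise_cons.mp hl
    have horth : a ≤ (l.foldr (· ⊔ ·) ⊥)ᶜ := by
      have hle : l.foldr (· ⊔ ·) ⊥ ≤ aᶜ := by
        apply aux_foldr_le
        intro x hx
        have := Ortholattice.compl_le_compl _ _ (ha x hx)
        rwa [Ortholattice.compl_compl] at this
      have := Ortholattice.compl_le_compl _ _ hle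
      rwa [Ortholattice.compl_compl] at this
    have := hm.2.2 a (l.foldr (· ⊔ ·) ⊥) horth
    simp only [List.foldr_cons, List.map_cons, List.sum_cons]
    rw [this, ih hl']

end aux

/-- Key: one inequality direction. -/
lemma aux_key {α : Type*} [Ortholattice α] (S : Set (α → ℝ))
    (hS : ∀ m ∈ S, IsState m)
    (hstrong : ∀ a b : α, ∃ m ∈ S, ((m a = 1 → m b = 1) → a ≤ b))
    (n : ℕ) (T U : Fin n → List α)
    (hT : ∀ i, (T i).Pairwise fun x y => x ≤ yᶜ)
    (hU : ∀ i, (U i).Pairwise fun x y => x ≤ yᶜ)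
    (hmult : (∑ i, ((T i : Multiset α))) = ∑ i, ((U i : Multiset α))) :
    (Finset.univ.inf fun i => (T i).foldr (· ⊔ ·) ⊥) ≤
      (Finset.univ.inf fun i => (U i).foldr (· ⊔ ·) ⊥) := by
  apply Finset.le_inf
  intro j _
  set t : α := Finset.univ.inf fun i => (T i).foldr (· ⊔ ·) ⊥ with ht_def
  obtain ⟨m, hmS, hm⟩ := hstrong t ((U j).foldr (· ⊔ ·) ⊥)
  have hstate := hS m hmS
  apply hm
  intro hmt
  -- m (t i) = 1 for all i
  have hti : ∀ i, m ((T i).foldr (· ⊔ ·) ⊥) = 1 := by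
    intro i
    have h1 : t ≤ (T i).foldr (· ⊔ ·) ⊥ := Finset.inf_le (Finset.mem_univ i)
    have h2 := aux_state_mono hstate h1
    have h3 := (hstate.1 ((T i).foldr (· ⊔ ·) ⊥)).2
    linarith
  -- sums
  have hsum : ∀ (V : Fin n → List α),
      ∑ i, ((V i : Multiset α).map m).sum = ((∑ i, (V i : Multiset α)).map m).sum := by
    intro V
    rw [show Multiset.map m (∑ i, (V i : Multiset α)) = ∑ i, Multiset.map m (V i) from
      map_sum (Multiset.mapAddMonoidHom m) _ _]
    exact (map_sum Multiset.sumAddMonoidHom (fun i => Multiset.map m (V i)) _).symm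
  have hTsum : ∑ i, m ((T i).foldr (· ⊔ ·) ⊥) = ∑ i, ((T i : Multiset α).map m).sum := by
    apply Finset.sum_congr rfl
    intro i _
    rw [aux_state_foldr hstate (hT i)]
    simp
  have hUsum : ∑ i, m ((U i).foldr (· ⊔ ·) ⊥) = ∑ i, ((U i : Multiset α).map m).sum := by
    apply Finset.sum_congr rfl
    intro i _
    rw [aux_state_foldr hstate (hU i)]
    simp
  have htotal : ∑ i, m ((U i).foldr (· ⊔ ·) ⊥) = (n : ℝ) := by
    rw [hUsum, hsum, ← hmult, ← hsum, ← hTsum]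
    simp [hti]
  -- each m(u_i) ≤ 1 and sum = n, so each = 1
  by_contra hne1
  have hlt : m ((U j).foldr (· ⊔ ·) ⊥) < 1 :=
    lt_of_le_of_ne ((hstate.1 _).2) hne1
  have : ∑ i, m ((U i).foldr (· ⊔ ·) ⊥) < ∑ _i : Fin n, (1 : ℝ) := by
    apply Finset.sum_lt_sum
    · intro i _; exact (hstate.1 _).2
    · exact ⟨j, Finset.mem_univ j, hlt⟩
  simp only [Finset.sum_const, Finset.card_univ, Fintype.card_fin, nsmul_eq_mul, mul_one] at this
  rw [htotal] at this
  exact lt_irrefl _ this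

theorem stmt_14 {α : Type*} [Ortholattice α] (S : Set (α → ℝ))
    (hne : S.Nonempty) (hS : ∀ m ∈ S, IsState m)
    (hstrong : ∀ a b : α, ∃ m ∈ S, ((m a = 1 → m b = 1) → a ≤ b))
    (n : ℕ) (hn : 2 ≤ n) (T U : Fin n → List α)
    (hT : ∀ i, (T i).Pairwise fun x y => x ≤ yᶜ)
    (hU : ∀ i, (U i).Pairwise fun x y => x ≤ yᶜ)
    (hmult : (∑ i, ((T i : Multiset α))) = ∑ i, ((U i : Multiset α))) :
    (Finset.univ.inf fun i => (T i).foldr (· ⊔ ·) ⊥) =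
      (Finset.univ.inf fun i => (U i).foldr (· ⊔ ·) ⊥) := by
  exact le_antisymm (aux_key S hS hstrong n T U hT hU hmult)
    (aux_key S hS hstrong n U T hU hT hmult.symm)
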